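/- Fix the shared-seed coordinated sampling setup and a function f : V → ℝ_{≥0}. If for every v ∈ V one has lim_{u→0⁺} f̲^{(v)}(u) = f(v), then the J estimator is unbiased: for every v ∈ V, ∫_0^1 f̂^{(J)}(u,v) du = f(v). -/

import Mathlib

open MeasureTheory Set Filter Topology

noncomputable section

/-- A shared-seed coordinated sampling scheme on a data domain `V ⊆ ℝ_{≥0}^r`:
continuous non-decreasing seed-to-threshold maps `τ i : [0,1] → ℝ` whose range
infimum is at most the infimum of the `i`-th coordinate over the domain. -/
structure CoordScheme (r : ℕ) where
  V : Set (Fin r → ℝ)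
  τ : Fin r → ℝ → ℝ
  V_nonneg : ∀ v ∈ V, ∀ i, 0 ≤ v i
  τ_cont : ∀ i, ContinuousOn (τ i) (Set.Icc 0 1)
  τ_mono : ∀ i, MonotoneOn (τ i) (Set.Icc 0 1)
  τ_inf : ∀ i, sInf (τ i '' Set.Icc 0 1) ≤ sInf ((fun v => v i) '' V)

namespace CoordScheme

variable {r : ℕ}

/-- The set `S(u,v)` of sampled entries: `i` is sampled iff `v i ≥ τ i u`. -/
def sampled (C : CoordScheme r) (u : ℝ) (v : Fin r → ℝ) : Set (Fin r) :=
  {i | C.τ i u ≤ v i}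

/-- The consistent set `V*(u,v)` of data vectors consistent with the outcome `S(u,v)`. -/
def Vstar (C : CoordScheme r) (u : ℝ) (v : Fin r → ℝ) : Set (Fin r → ℝ) :=
  {z ∈ C.V | ∀ i, (C.τ i u ≤ v i → z i = v i) ∧ (v i < C.τ i u → z i < C.τ i u)}

/-- The lower bound function `f̲(u,v) = inf { f z : z ∈ V*(u,v) }`. -/
def lb (C : CoordScheme r) (f : (Fin r → ℝ) → ℝ) (u : ℝ) (v : Fin r → ℝ) : ℝ :=
  sInf (f '' C.Vstar u v)

/-- An estimator: an integrable function of the outcome (it takes equal values on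
data vectors consistent with the same outcome). -/
structure IsEstimator (C : CoordScheme r) (fhat : ℝ → (Fin r → ℝ) → ℝ) : Prop where
  integrable : ∀ v ∈ C.V, IntegrableOn (fun u => fhat u v) (Set.Ioc (0:ℝ) 1)
  consistent : ∀ u ∈ Set.Ioc (0:ℝ) 1, ∀ v ∈ C.V, ∀ z ∈ C.Vstar u v, fhat u v = fhat u z

/-- A nonnegative estimator. -/
def Nonneg (C : CoordScheme r) (fhat : ℝ → (Fin r → ℝ) → ℝ) : Prop :=
  ∀ u ∈ Set.Ioc (0:ℝ) 1, ∀ v ∈ C.V, 0 ≤ fhat u v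

/-- An unbiased estimator of `f`. -/
def Unbiased (C : CoordScheme r) (f : (Fin r → ℝ) → ℝ)
    (fhat : ℝ → (Fin r → ℝ) → ℝ) : Prop :=
  ∀ v ∈ C.V, (∫ u in Set.Ioc (0:ℝ) 1, fhat u v) = f v

end CoordScheme

/-- Lower convex hull of `g` on `(0,1]`: the pointwise largest convex function
bounded above by `g` there. -/
def lowerHull (g : ℝ → ℝ) (u : ℝ) : ℝ :=
  sSup {y : ℝ | ∃ h : ℝ → ℝ, ConvexOn ℝ (Set.Ioc (0:ℝ) 1) h ∧
      (∀ x ∈ Set.Ioc (0:ℝ) 1, h x ≤ g x) ∧ y = h u}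

namespace CoordScheme

variable {r : ℕ}

/-- The `v`-optimal estimates: the negated derivative of the lower hull of the
lower-bound function `u ↦ f̲(u,v)`. -/
def optEst (C : CoordScheme r) (f : (Fin r → ℝ) → ℝ) (v : Fin r → ℝ) (u : ℝ) : ℝ :=
  -deriv (lowerHull (fun x => C.lb f x v)) u

/-- Cumulative integral `∫_{2^{-j}}^1` of the J estimator (by its defining recursion):
`Jint (j+1) = Jint j + (value on `(2^{-j-1},2^{-j}]`) ⬝ 2^{-j-1}`. -/
def Jint (C : CoordScheme r) (f : (Fin r → ℝ) → ℝ) (v : Fin r → ℝ) : ℕ → ℝ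
  | 0 => 0
  | (j+1) => Jint C f v j +
      ((2:ℝ) ^ (j+1) * (C.lb f ((2:ℝ) ^ (-(j:ℤ))) v - Jint C f v j)) * (2:ℝ) ^ (-(j:ℤ) - 1)

/-- The (constant) value of the J estimator on the dyadic interval `(2^{-j-1}, 2^{-j}]`.
For `j = 0` this is `2 ⬝ f̲(1,v)`; for `j ≥ 1` it is
`2^{j+1} ⬝ ( f̲(2^{-j},v) − ∫_{2^{-j}}^1 f̂⁽ᴶ⁾(x,v) dx )`. -/
def Jval (C : CoordScheme r) (f : (Fin r → ℝ) → ℝ) (v : Fin r → ℝ) (j : ℕ) : ℝ :=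
  (2:ℝ) ^ (j+1) * (C.lb f ((2:ℝ) ^ (-(j:ℤ))) v - Jint C f v j)

/-- The J estimator `f̂⁽ᴶ⁾(u,v)`: on `u ∈ (2^{-j-1}, 2^{-j}]` it takes the value `Jval j`. -/
def Jest (C : CoordScheme r) (f : (Fin r → ℝ) → ℝ) (u : ℝ) (v : Fin r → ℝ) : ℝ :=
  C.Jval f v ⌊-Real.logb 2 u⌋₊

end CoordScheme

namespace CoordScheme

variable {r : ℕ}

lemma mem_Vstar_self (C : CoordScheme r) {v : Fin r → ℝ} (hv : v ∈ C.V) (u : ℝ) :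
    v ∈ C.Vstar u v :=
  ⟨hv, fun _ => ⟨fun _ => rfl, fun h => h⟩⟩

lemma Vstar_subset (C : CoordScheme r) {v : Fin r → ℝ} {u u' : ℝ}
    (hu' : u' ∈ Set.Icc (0:ℝ) 1) (hu : u ∈ Set.Icc (0:ℝ) 1) (h : u' ≤ u) :
    C.Vstar u' v ⊆ C.Vstar u v := by
  rintro z ⟨hzV, hz⟩
  refine ⟨hzV, fun i => ?_⟩
  have hτ : C.τ i u' ≤ C.τ i u := C.τ_mono i hu' hu h
  obtain ⟨h1, h2⟩ := hz i
  constructor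
  · intro hle; exact h1 (hτ.trans hle)
  · intro _
    by_cases hc : C.τ i u' ≤ v i
    · rw [h1 hc]; assumption
    · exact (h2 (not_le.1 hc)).trans_le hτ

lemma lb_bddBelow (C : CoordScheme r) {f : (Fin r → ℝ) → ℝ}
    (hf : ∀ z ∈ C.V, 0 ≤ f z) (u : ℝ) (v : Fin r → ℝ) :
    BddBelow (f '' C.Vstar u v) := by
  refine ⟨0, ?_⟩
  rintro y ⟨z, hz, rfl⟩
  exact hf z hz.1

lemma lb_nonneg (C : CoordScheme r) {f : (Fin r → ℝ) → ℝ}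
    (hf : ∀ z ∈ C.V, 0 ≤ f z) {v : Fin r → ℝ} (hv : v ∈ C.V) (u : ℝ) :
    0 ≤ C.lb f u v := by
  refine le_csInf ⟨f v, v, C.mem_Vstar_self hv u, rfl⟩ ?_
  rintro y ⟨z, hz, rfl⟩
  exact hf z hz.1

lemma lb_anti (C : CoordScheme r) {f : (Fin r → ℝ) → ℝ}
    (hf : ∀ z ∈ C.V, 0 ≤ f z) {v : Fin r → ℝ} (hv : v ∈ C.V) {u u' : ℝ}
    (hu' : u' ∈ Set.Icc (0:ℝ) 1) (hu : u ∈ Set.Icc (0:ℝ) 1) (h : u' ≤ u) :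
    C.lb f u v ≤ C.lb f u' v :=
  csInf_le_csInf (C.lb_bddBelow hf u v) ⟨f v, v, C.mem_Vstar_self hv u', rfl⟩
    (Set.image_mono (C.Vstar_subset hu' hu h))

end CoordScheme

/-- if `lim_{u→0⁺} f̲⁽ᵛ⁾(u) = f(v)` for every `v ∈ V`, then the
J estimator is unbiased. -/
theorem stmt13 {r : ℕ} (C : CoordScheme r) (f : (Fin r → ℝ) → ℝ)
    (hf : ∀ v ∈ C.V, 0 ≤ f v)
    (hlim : ∀ v ∈ C.V,
      Filter.Tendsto (fun u => C.lb f u v) (𝓝[>] (0:ℝ)) (𝓝 (f v))) :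
    ∀ v ∈ C.V, (∫ u in Set.Ioc (0:ℝ) 1, C.Jest f u v) = f v := by
  intro v hv
  -- basic facts about the dyadic points
  have hbpos : ∀ n : ℤ, (0:ℝ) < (2:ℝ) ^ n := fun n => by positivity
  have hb01 : ∀ j : ℕ, (2:ℝ) ^ (-(j:ℤ)) ∈ Set.Icc (0:ℝ) 1 := by
    intro j
    refine ⟨(hbpos _).le, ?_⟩
    have : (-(j:ℤ)) ≤ 0 := by omega
    calc (2:ℝ) ^ (-(j:ℤ)) ≤ (2:ℝ) ^ (0:ℤ) := zpow_le_zpow_right₀ one_le_two this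
    _ = 1 := zpow_zero 2
  have hb1 : ∀ j : ℕ, (2:ℝ) ^ (-(j:ℤ)-1) ∈ Set.Icc (0:ℝ) 1 := by
    intro j
    have h := hb01 (j+1)
    have hc : (-((j+1:ℕ):ℤ)) = -(j:ℤ)-1 := by push_cast; ring
    rwa [hc] at h
  have hbstep : ∀ j : ℕ, (2:ℝ) ^ (-(j:ℤ)-1) ≤ (2:ℝ) ^ (-(j:ℤ)) :=
    fun j => zpow_le_zpow_right₀ one_le_two (by omega)
  have hbdiff : ∀ j : ℕ, (2:ℝ) ^ (-(j:ℤ)) - (2:ℝ) ^ (-(j:ℤ)-1) = (2:ℝ) ^ (-(j:ℤ)-1) := by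
    intro j
    have h2 : (2:ℝ) ^ (-(j:ℤ)) = (2:ℝ) ^ (-(j:ℤ)-1) * 2 := by
      rw [← zpow_add_one₀ (two_ne_zero : (2:ℝ) ≠ 0)]
      congr 1; ring
    linarith
  -- Jint recursion: Jint (j+1) = lb (2^{-j})
  have hJint : ∀ j : ℕ, C.Jint f v (j+1) = C.lb f ((2:ℝ) ^ (-(j:ℤ))) v := by
    intro j
    show C.Jint f v j +
        ((2:ℝ) ^ (j+1) * (C.lb f ((2:ℝ) ^ (-(j:ℤ))) v - C.Jint f v j)) * (2:ℝ) ^ (-(j:ℤ)-1)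
        = C.lb f ((2:ℝ) ^ (-(j:ℤ))) v
    have h2 : (2:ℝ) ^ (j+1) * (2:ℝ) ^ (-(j:ℤ)-1) = 1 := by
      rw [← zpow_natCast (2:ℝ) (j+1), ← zpow_add₀ (two_ne_zero : (2:ℝ) ≠ 0)]
      have : ((j+1:ℕ):ℤ) + (-(j:ℤ)-1) = 0 := by push_cast; ring
      rw [this, zpow_zero]
    linear_combination (C.lb f ((2:ℝ) ^ (-(j:ℤ))) v - C.Jint f v j) * h2
  -- nonnegativity of Jval
  have hJvalnn : ∀ j : ℕ, 0 ≤ C.Jval f v j := by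
    intro j
    cases j with
    | zero =>
      have h0 : 0 ≤ C.lb f ((2:ℝ) ^ (-(0:ℕ):ℤ)) v := C.lb_nonneg hf hv _
      have : C.Jint f v 0 = 0 := rfl
      unfold CoordScheme.Jval
      rw [this, sub_zero]
      exact mul_nonneg (by positivity) (C.lb_nonneg hf hv _)
    | succ j =>
      have hc : (-((j+1:ℕ):ℤ)) = -(j:ℤ)-1 := by push_cast; ring
      have hle : C.lb f ((2:ℝ) ^ (-(j:ℤ))) v ≤ C.lb f ((2:ℝ) ^ (-(j:ℤ)-1)) v :=
        C.lb_anti hf hv (hb1 j) (hb01 j) (hbstep j)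
      unfold CoordScheme.Jval
      rw [hJint j, hc]
      have h2 : (0:ℝ) ≤ (2:ℝ) ^ (j+1+1) := by positivity
      exact mul_nonneg h2 (by linarith)
  have hJintnn : ∀ j : ℕ, 0 ≤ C.Jint f v j := by
    intro j
    induction j with
    | zero => exact le_refl 0
    | succ j ih =>
      have : C.Jint f v (j+1) = C.Jint f v j + C.Jval f v j * (2:ℝ) ^ (-(j:ℤ)-1) := rfl
      rw [this]
      have := hJvalnn j
      have h2 := (hbpos (-(j:ℤ)-1)).le
      positivity
  -- floor characterization on dyadic intervals
  have hfloor : ∀ j : ℕ, ∀ u : ℝ, (2:ℝ) ^ (-(j:ℤ)-1) < u → u ≤ (2:ℝ) ^ (-(j:ℤ)) →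
      ⌊-Real.logb 2 u⌋₊ = j := by
    intro j u h1 h2
    have hu0 : 0 < u := lt_trans (hbpos _) h1
    have hle : Real.logb 2 u ≤ -(j:ℝ) := by
      rw [Real.logb_le_iff_le_rpow one_lt_two hu0,
        show (-(j:ℝ)) = ((-(j:ℤ) : ℤ):ℝ) by push_cast; ring, Real.rpow_intCast]
      exact h2
    have hlt : -((j:ℝ)+1) < Real.logb 2 u := by
      rw [Real.lt_logb_iff_rpow_lt one_lt_two hu0,
        show (-((j:ℝ)+1)) = ((-(j:ℤ)-1 : ℤ):ℝ) by push_cast; ring, Real.rpow_intCast]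
      exact h1
    have hjnn : (0:ℝ) ≤ (j:ℝ) := Nat.cast_nonneg j
    rw [Nat.floor_eq_iff (by linarith)]
    constructor
    · linarith
    · push_cast; linarith
  -- the J estimator is constant on dyadic intervals
  have hJest : ∀ j : ℕ, ∀ u ∈ Set.Ioc ((2:ℝ) ^ (-(j:ℤ)-1)) ((2:ℝ) ^ (-(j:ℤ))),
      C.Jest f u v = C.Jval f v j := by
    intro j u hu
    unfold CoordScheme.Jest
    rw [hfloor j u hu.1 hu.2]
  have hJestnn : ∀ u : ℝ, 0 ≤ C.Jest f u v := fun u => hJvalnn _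
  -- measurability
  have hmeas : Measurable fun u => C.Jest f u v := by
    have h1 : Measurable fun u : ℝ => -Real.logb 2 u := by
      unfold Real.logb
      exact (Real.measurable_log.div_const _).neg
    exact (measurable_from_nat (f := C.Jval f v)).comp (h1.nat_floor)
  -- dyadic decomposition of (0,1]
  have hunion : (⋃ j : ℕ, Set.Ioc ((2:ℝ) ^ (-(j:ℤ)-1)) ((2:ℝ) ^ (-(j:ℤ)))) =
      Set.Ioc (0:ℝ) 1 := by
    ext u
    simp only [Set.mem_iUnion, Set.mem_Ioc]
    constructor
    · rintro ⟨j, h1, h2⟩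
      exact ⟨lt_trans (hbpos _) h1, h2.trans (hb01 j).2⟩
    · rintro ⟨h0, h1⟩
      have hlogb : Real.logb 2 u ≤ 0 := Real.logb_nonpos one_lt_two h0.le h1
      have hnn : 0 ≤ -Real.logb 2 u := by linarith
      set j := ⌊-Real.logb 2 u⌋₊ with hj
      refine ⟨j, ?_, ?_⟩
      · have hlt : -Real.logb 2 u < (j:ℝ) + 1 := Nat.lt_floor_add_one _
        have : -((j:ℝ)+1) < Real.logb 2 u := by linarith
        rw [Real.lt_logb_iff_rpow_lt one_lt_two h0,
          show (-((j:ℝ)+1)) = ((-(j:ℤ)-1 : ℤ):ℝ) by push_cast; ring,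
          Real.rpow_intCast] at this
        exact this
      · have hle : (j:ℝ) ≤ -Real.logb 2 u := Nat.floor_le hnn
        have : Real.logb 2 u ≤ -(j:ℝ) := by linarith
        rw [Real.logb_le_iff_le_rpow one_lt_two h0,
          show (-(j:ℝ)) = ((-(j:ℤ) : ℤ):ℝ) by push_cast; ring,
          Real.rpow_intCast] at this
        exact this
  have hdisj : Pairwise (Function.onFun Disjoint
      fun j : ℕ => Set.Ioc ((2:ℝ) ^ (-(j:ℤ)-1)) ((2:ℝ) ^ (-(j:ℤ)))) := by
    intro j k hjk
    refine Set.disjoint_left.2 fun u huj huk => hjk ?_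
    rw [← hfloor j u huj.1 huj.2, ← hfloor k u huk.1 huk.2]
  -- compute the lintegral
  have hpiece : ∀ j : ℕ,
      (∫⁻ u in Set.Ioc ((2:ℝ) ^ (-(j:ℤ)-1)) ((2:ℝ) ^ (-(j:ℤ))),
        ENNReal.ofReal (C.Jest f u v)) =
      ENNReal.ofReal (C.Jval f v j * (2:ℝ) ^ (-(j:ℤ)-1)) := by
    intro j
    rw [setLIntegral_congr_fun measurableSet_Ioc
        (fun u hu => by rw [hJest j u hu]), setLIntegral_const,
      Real.volume_Ioc, hbdiff j, ← ENNReal.ofReal_mul (hJvalnn j)]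
  have hpartial : ∀ N : ℕ,
      (∑ j ∈ Finset.range N, ENNReal.ofReal (C.Jval f v j * (2:ℝ) ^ (-(j:ℤ)-1))) =
      ENNReal.ofReal (C.Jint f v N) := by
    intro N
    induction N with
    | zero => simp [CoordScheme.Jint]
    | succ N ih =>
      rw [Finset.sum_range_succ, ih,
        show C.Jint f v (N+1) = C.Jint f v N + C.Jval f v N * (2:ℝ) ^ (-(N:ℤ)-1) from rfl,
        ENNReal.ofReal_add (hJintnn N) (mul_nonneg (hJvalnn N) (hbpos _).le)]
  -- Jint tends to f v
  have hb0 : Tendsto (fun N : ℕ => (2:ℝ) ^ (-(N:ℤ))) atTop (𝓝[>] (0:ℝ)) := by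
    rw [tendsto_nhdsWithin_iff]
    constructor
    · have heq : (fun N : ℕ => (2:ℝ) ^ (-(N:ℤ))) = fun N : ℕ => ((2:ℝ)⁻¹) ^ N := by
        funext N
        rw [zpow_neg, zpow_natCast, inv_pow]
      rw [heq]
      exact tendsto_pow_atTop_nhds_zero_of_lt_one (by norm_num) (by norm_num)
    · exact Filter.Eventually.of_forall fun N => hbpos _
  have hJinttend : Tendsto (fun N : ℕ => C.Jint f v N) atTop (𝓝 (f v)) := by
    rw [← Filter.tendsto_add_atTop_iff_nat 1]
    have : (fun N : ℕ => C.Jint f v (N + 1)) =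
        fun N : ℕ => C.lb f ((2:ℝ) ^ (-(N:ℤ))) v := funext hJint
    rw [this]
    exact (hlim v hv).comp hb0
  -- conclude
  have key : (∫⁻ u in Set.Ioc (0:ℝ) 1, ENNReal.ofReal (C.Jest f u v)) =
      ENNReal.ofReal (f v) := by
    rw [← hunion, lintegral_iUnion (fun _ => measurableSet_Ioc) hdisj]
    calc (∑' j : ℕ, ∫⁻ u in Set.Ioc ((2:ℝ) ^ (-(j:ℤ)-1)) ((2:ℝ) ^ (-(j:ℤ))),
          ENNReal.ofReal (C.Jest f u v))
        = ∑' j : ℕ, ENNReal.ofReal (C.Jval f v j * (2:ℝ) ^ (-(j:ℤ)-1)) :=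
          tsum_congr hpiece
      _ = ENNReal.ofReal (f v) := by
          refine tendsto_nhds_unique (ENNReal.tendsto_nat_tsum _) ?_
          have heq : (fun N : ℕ => ∑ j ∈ Finset.range N,
              ENNReal.ofReal (C.Jval f v j * (2:ℝ) ^ (-(j:ℤ)-1))) =
              fun N : ℕ => ENNReal.ofReal (C.Jint f v N) := funext hpartial
          rw [heq]
          exact (ENNReal.continuous_ofReal.tendsto _).comp hJinttend
  rw [integral_eq_lintegral_of_nonneg_ae (ae_of_all _ hJestnn)
    hmeas.aestronglyMeasurable, key, ENNReal.toReal_ofReal (hf v hv)]
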